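/- Let G = K_{n₁,…,n_r} be a complete multipartite graph with part sizes n₁ ≥ … ≥ n_t ≥ 2 and n_{t+1} = … = n_r = 1, and let m be its number of edges. Then tmc(G) = m + r − t. -/

import Mathlib

open SimpleGraph Finset

/-- A walk in a total-colored graph is *total monochromatic* if all of its edges and
internal vertices have the same color. -/
def IsTotalMonoWalk {V : Type*} {G : SimpleGraph V} (ce : Sym2 V → ℕ) (cv : V → ℕ)
    {u v : V} (w : G.Walk u v) : Prop :=
  ∃ c, (∀ e ∈ w.edges, ce e = c) ∧ ∀ x ∈ w.support.tail.dropLast, cv x = c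

/-- A total coloring (edge coloring `ce`, vertex coloring `cv`) of `G` is a
*TMC-coloring* if any two vertices are connected by a total monochromatic path. -/
def IsTMCColoring {V : Type*} (G : SimpleGraph V) (ce : Sym2 V → ℕ) (cv : V → ℕ) : Prop :=
  ∀ u v : V, u ≠ v → ∃ w : G.Walk u v, w.IsPath ∧ IsTotalMonoWalk ce cv w

/-- The number of colors used by a total coloring of `G`:
colors appearing on edges of `G` together with colors appearing on vertices. -/
noncomputable def colorsUsed {V : Type*} (G : SimpleGraph V) (ce : Sym2 V → ℕ) (cv : V → ℕ) : ℕ :=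
  (ce '' G.edgeSet ∪ Set.range cv).ncard

/-- The total monochromatic connection number `tmc G`: the maximum number of colors
used in a TMC-coloring of `G`. -/
noncomputable def tmc {V : Type*} [Fintype V] (G : SimpleGraph V) : ℕ :=
  sSup {k | ∃ ce cv, IsTMCColoring G ce cv ∧ colorsUsed G ce cv = k}

lemma extract {V : Type*} {G : SimpleGraph V} {ce : Sym2 V → ℕ} {cv : V → ℕ} {u v : V}
    (w : G.Walk u v) (hm : IsTotalMonoWalk ce cv w) (hne : u ≠ v) (hna : ¬ G.Adj u v) :
    ∃ x, G.Adj u x ∧ x ≠ u ∧ cv x = ce s(u, x) := by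
  match w with
  | .nil => exact (hne rfl).elim
  | .cons h .nil => exact (hna h).elim
  | .cons (v := x) h (.cons (v := y) h' p) =>
    obtain ⟨c, hce, hcv⟩ := hm
    refine ⟨x, h, (G.ne_of_adj h).symm, ?_⟩
    have h1 : ce s(u, x) = c := hce _ (by simp [Walk.edges_cons])
    have h2 : cv x = c := by
      apply hcv; simp [Walk.support_cons, List.dropLast]
    rw [h1, h2]

lemma colorsUsed_eq {V : Type*} [Fintype V] [DecidableEq V] (G : SimpleGraph V)
    [DecidableRel G.Adj] (ce : Sym2 V → ℕ) (cv : V → ℕ) :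
    colorsUsed G ce cv = (G.edgeFinset.image ce ∪ univ.image cv).card := by
  classical
  rw [colorsUsed, ← Set.ncard_coe_finset]
  congr 1
  simp [Set.image_univ]

lemma tmc_upper {V : Type*} [Fintype V] [DecidableEq V] {G : SimpleGraph V}
    [DecidableRel G.Adj] {ce : Sym2 V → ℕ} {cv : V → ℕ}
    (h : IsTMCColoring G ce cv) (Big : Finset V)
    (hB : ∀ u ∈ Big, ∃ v, v ≠ u ∧ ¬ G.Adj u v) :
    colorsUsed G ce cv + Big.card ≤ G.edgeFinset.card + Fintype.card V := by
  classical
  cases isEmpty_or_nonempty V with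
  | inl hV =>
    have hB0 : Big = ∅ := Finset.eq_empty_of_isEmpty Big
    have hE0 : G.edgeFinset = ∅ := by
      ext e
      refine e.ind (fun a b => ?_)
      exact (hV.false a).elim
    simp [colorsUsed_eq, hB0, hE0, Finset.eq_empty_of_isEmpty (univ : Finset V)]
  | inr hV =>
  obtain ⟨ν, hν⟩ := Countable.exists_injective_nat V
  letI : LinearOrder V := LinearOrder.lift' ν hν
  have key : ∀ u ∈ Big, ∃ x, G.Adj u x ∧ x ≠ u ∧ cv x = ce s(u, x) := by
    intro u hu
    obtain ⟨v, hvne, hvna⟩ := hB u hu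
    obtain ⟨w, _, hmono⟩ := h u v (Ne.symm hvne)
    exact extract w hmono (Ne.symm hvne) hvna
  choose! x hadj hxne hxcv using key
  set CF : Finset ℕ := G.edgeFinset.image ce ∪ univ.image cv with hCF
  set F : V → Sym2 V ⊕ V :=
    fun u => if x u < u ∧ cv u = ce s(u, x u) then .inr u else .inl s(u, x u) with hF
  set Ψ : ℕ → Sym2 V ⊕ V := fun c =>
    if hc : (univ.filter (fun v => cv v = c)).Nonempty then .inr ((univ.filter (fun v => cv v = c)).min' hc)
    else if hc2 : (G.edgeFinset.filter (fun e => ce e = c)).Nonempty then .inl hc2.choose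
    else .inr (Classical.arbitrary V) with hΨ
  have hcolF : ∀ u ∈ Big, Sum.elim ce cv (F u) = ce s(u, x u) := by
    intro u hu
    rw [hF]; dsimp only
    split_ifs with hcond
    · simpa using hcond.2
    · simp
  have hcolΨ : ∀ c ∈ CF, Sum.elim ce cv (Ψ c) = c := by
    intro c hc
    rw [hΨ]; dsimp only
    split_ifs with h1 h2
    · have := Finset.min'_mem _ h1
      simp only [Finset.mem_filter] at this
      simpa using this.2
    · have := h2.choose_spec
      simp only [Finset.mem_filter] at this
      simpa using this.2
    · exfalso
      simp only [hCF, Finset.mem_union, Finset.mem_image] at hc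
      rcases hc with ⟨e, he, hec⟩ | ⟨v, _, hvc⟩
      · exact h2 ⟨e, by simp [he, hec]⟩
      · exact h1 ⟨v, by simp [hvc]⟩
  -- injectivity of F on Big
  have hFinj : ∀ u ∈ Big, ∀ u' ∈ Big, F u = F u' → u = u' := by
    intro u hu u' hu' heq
    rw [hF] at heq; dsimp only at heq
    by_cases h1 : x u < u ∧ cv u = ce s(u, x u) <;>
      by_cases h2 : x u' < u' ∧ cv u' = ce s(u', x u') <;>
      simp only [h1, h2, if_true, if_false, if_pos, if_neg, not_false_iff] at heq
    rotate_left
    · exact absurd heq (by simp)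
    · exact absurd heq (by simp)
    pick_goal 2
    · exact Sum.inr.inj heq
    · have hee : s(u, x u) = s(u', x u') := Sum.inl.inj heq
      rw [Sym2.eq_iff] at hee
      rcases hee with ⟨h3, _⟩ | ⟨h3, h4⟩
      · exact h3
      · -- u = x u', x u = u'
        have hce : ce s(u, x u) = ce s(u', x u') := by
          congr 1; rw [Sym2.eq_iff]; right; exact ⟨h3, h4⟩
        have hcvu : cv u = ce s(u, x u) :=
          (congrArg cv h3).trans ((hxcv u' hu').trans hce.symm)
        have hcvu' : cv u' = ce s(u', x u') :=
          (congrArg cv h4.symm).trans ((hxcv u hu).trans hce)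
        have n1 : ¬ (x u < u) := fun hlt => h1 ⟨hlt, hcvu⟩
        have n2 : ¬ (x u' < u') := fun hlt => h2 ⟨hlt, hcvu'⟩
        rw [h4] at n1; rw [← h3] at n2
        exact le_antisymm (not_lt.mp n1) (not_lt.mp n2)
  -- disjointness of images
  have hdisj : Disjoint (Big.image F) (CF.image Ψ) := by
    rw [Finset.disjoint_left]
    rintro a haF haΨ
    simp only [Finset.mem_image] at haF haΨ
    obtain ⟨u, hu, hFu⟩ := haF
    obtain ⟨c, hc, hΨc⟩ := haΨ
    have hcc : ce s(u, x u) = c := by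
      rw [← hcolF u hu, ← hcolΨ c hc, hFu, hΨc]
    have hxVc : x u ∈ univ.filter (fun v => cv v = c) := by
      simp [hxcv u hu, hcc]
    have hVcne : (univ.filter (fun v => cv v = c)).Nonempty := ⟨_, hxVc⟩
    rw [hΨ] at hΨc; dsimp only at hΨc
    rw [dif_pos hVcne] at hΨc
    rw [hF] at hFu; dsimp only at hFu
    split_ifs at hFu with h1
    · -- F u = inr u, so u = min', but x u < u and x u ∈ filter
      have humin : u = (univ.filter (fun v => cv v = c)).min' hVcne := by
        rw [← hFu] at hΨc; exact Sum.inr.inj hΨc.symm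
      have := Finset.min'_le _ _ hxVc
      rw [← humin] at this
      exact absurd (lt_of_lt_of_le h1.1 this) (lt_irrefl _)
    · rw [← hFu] at hΨc; exact Sum.inr_ne_inl hΨc
  -- images inside edge ⊕ vertex
  have hsub : Big.image F ∪ CF.image Ψ ⊆
      G.edgeFinset.image Sum.inl ∪ (univ : Finset V).image Sum.inr := by
    intro a ha
    simp only [Finset.mem_union, Finset.mem_image] at ha ⊢
    rcases ha with ⟨u, hu, hFu⟩ | ⟨c, hc, hΨc⟩
    · rw [hF] at hFu; dsimp only at hFu
      split_ifs at hFu with h1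
      · right; exact ⟨u, mem_univ u, hFu⟩
      · left; exact ⟨s(u, x u), by simp [mem_edgeFinset, (hadj u hu)], hFu⟩
    · rw [hΨ] at hΨc; dsimp only at hΨc
      split_ifs at hΨc with h1 h2
      · right; exact ⟨_, mem_univ _, hΨc⟩
      · left
        have := h2.choose_spec
        simp only [Finset.mem_filter] at this
        exact ⟨_, this.1, hΨc⟩
      · right; exact ⟨_, mem_univ _, hΨc⟩
  -- cardinality chase
  have hcards : Big.card + CF.card ≤ G.edgeFinset.card + Fintype.card V := by
    have h1 : (Big.image F).card = Big.card := Finset.card_image_of_injOn hFinj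
    have h2 : (CF.image Ψ).card = CF.card := Finset.card_image_of_injOn (by
      intro c hc c' hc' heq
      rw [← hcolΨ c hc, ← hcolΨ c' hc', heq])
    have h3 := Finset.card_union_of_disjoint hdisj
    have h4 := Finset.card_le_card hsub
    have h5 : (G.edgeFinset.image Sum.inl ∪ (univ : Finset V).image Sum.inr).card ≤
        G.edgeFinset.card + Fintype.card V := by
      refine (Finset.card_union_le _ _).trans ?_
      have := Finset.card_image_le (s := G.edgeFinset) (f := (Sum.inl : Sym2 V → Sym2 V ⊕ V))
      have := Finset.card_image_le (s := (univ : Finset V)) (f := (Sum.inr : V → Sym2 V ⊕ V))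
      simp only [Finset.card_univ] at *
      omega
    omega
  rw [colorsUsed_eq, ← hCF]
  omega

lemma cardB {r t : ℕ} (sizes : Fin r → ℕ) :
    ((univ : Finset ((i : Fin r) × Fin (sizes i))).filter (fun v => v.1.val < t)).card
      = ∑ i ∈ (univ : Finset (Fin r)).filter (fun i => i.val < t), sizes i := by
  classical
  have : ((univ : Finset ((i : Fin r) × Fin (sizes i))).filter (fun v => v.1.val < t))
      = ((univ : Finset (Fin r)).filter (fun i => i.val < t)).sigma (fun i => univ) := by
    ext ⟨i, a⟩
    simp [Finset.mem_sigma]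
  rw [this, Finset.card_sigma]
  simp

lemma cardV {r : ℕ} (sizes : Fin r → ℕ) :
    Fintype.card ((i : Fin r) × Fin (sizes i)) = ∑ i : Fin r, sizes i := by
  simp [Fintype.card_sigma]

lemma cardFilterLt {r t : ℕ} (ht : t ≤ r) :
    ((univ : Finset (Fin r)).filter (fun i => i.val < t)).card = t := by
  classical
  have : ((univ : Finset (Fin r)).filter (fun i => i.val < t))
      = (univ : Finset (Fin t)).image (Fin.castLE ht) := by
    ext i
    simp only [Finset.mem_filter, Finset.mem_univ, true_and, Finset.mem_image]
    constructor
    · intro hi; exact ⟨⟨i, hi⟩, by ext; simp [Fin.castLE]⟩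
    · rintro ⟨j, rfl⟩; exact j.2
  rw [this, Finset.card_image_of_injective _ (Fin.castLE_injective ht)]
  simp

lemma sumSizes {r t : ℕ} (sizes : Fin r → ℕ) (ht : t ≤ r)
    (h1 : ∀ i : Fin r, t ≤ i.val → sizes i = 1) :
    ∑ i : Fin r, sizes i
      = (∑ i ∈ (univ : Finset (Fin r)).filter (fun i => i.val < t), sizes i) + (r - t) := by
  classical
  rw [← Finset.sum_filter_add_sum_filter_not univ (fun i : Fin r => i.val < t) sizes]
  congr 1
  have h2 : ∀ i ∈ (univ : Finset (Fin r)).filter (fun i => ¬ i.val < t), sizes i = 1 := by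
    intro i hi
    simp only [Finset.mem_filter] at hi
    exact h1 i (not_lt.mp hi.2)
  rw [Finset.sum_congr rfl h2]
  simp only [Finset.sum_const, smul_eq_mul, mul_one]
  have hc := Finset.card_filter_add_card_filter_not
    (s := (univ : Finset (Fin r))) (p := fun i : Fin r => i.val < t)
  have := cardFilterLt (r := r) ht
  simp only [Finset.card_univ, Fintype.card_fin] at hc
  omega


instance mpDecAdj {r : ℕ} {sizes : Fin r → ℕ} :
    DecidableRel (completeMultipartiteGraph (fun i : Fin r => Fin (sizes i))).Adj :=
  fun u v => inferInstanceAs (Decidable ¬(u.1 = v.1))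

lemma construction {r t : ℕ} {sizes : Fin r → ℕ} (ht : t ≤ r) (hr : 2 ≤ r)
    (h2 : ∀ i : Fin r, i.val < t → 2 ≤ sizes i)
    (h1 : ∀ i : Fin r, t ≤ i.val → sizes i = 1) :
    ∃ (ce : Sym2 ((i : Fin r) × Fin (sizes i)) → ℕ) (cv : ((i : Fin r) × Fin (sizes i)) → ℕ),
      IsTMCColoring (completeMultipartiteGraph (fun i : Fin r => Fin (sizes i))) ce cv ∧
      (completeMultipartiteGraph (fun i : Fin r => Fin (sizes i))).edgeFinset.card
          + Fintype.card ((i : Fin r) × Fin (sizes i))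
        ≤ colorsUsed (completeMultipartiteGraph (fun i : Fin r => Fin (sizes i))) ce cv
          + ((univ : Finset ((i : Fin r) × Fin (sizes i))).filter (fun v => v.1.val < t)).card := by
  classical
  set G := completeMultipartiteGraph (fun i : Fin r => Fin (sizes i)) with hG
  have hpos : ∀ i : Fin r, 0 < sizes i := by
    intro i
    rcases lt_or_ge i.val t with h | h
    · have := h2 i h; omega
    · rw [h1 i h]; omega
  set β : (i : Fin r) × Fin (sizes i) := ⟨⟨1, by omega⟩, ⟨0, hpos _⟩⟩ with hβ
  set α : (i : Fin r) × Fin (sizes i) := ⟨⟨0, by omega⟩, ⟨0, hpos _⟩⟩ with hα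
  obtain ⟨encE, hencE⟩ := Countable.exists_injective_nat (Sym2 ((i : Fin r) × Fin (sizes i)))
  obtain ⟨encV, hencV⟩ := Countable.exists_injective_nat ((i : Fin r) × Fin (sizes i))
  set dspec : ((i : Fin r) × Fin (sizes i)) → ((i : Fin r) × Fin (sizes i)) → Option ℕ :=
    fun u v =>
      if 0 < t ∧ u = β ∧ v.1.val = 0 then some 0
      else if 2 ≤ t ∧ u = α ∧ v.1.val = 1 then some 0
      else if 1 ≤ u.1.val ∧ u.1.val + 2 ≤ t ∧ u.2.val = 1 ∧ v.1.val = u.1.val + 1 then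
        some (u.1.val + 1)
      else none with hdspec
  have hds_lt : ∀ u v a, dspec u v = some a → a < t := by
    intro u v a h
    rw [hdspec] at h; dsimp only at h
    split_ifs at h with c1 c2 c3 <;> cases h <;> omega
  have hvalβ : ∀ u : (i : Fin r) × Fin (sizes i), u = β → u.1.val = 1 := by
    intro u h; rw [h, hβ]
  have hvalα : ∀ u : (i : Fin r) × Fin (sizes i), u = α → u.1.val = 0 := by
    intro u h; rw [h, hα]
  have hcons : ∀ u v a b, dspec u v = some a → dspec v u = some b → a = b := by
    intro u v a b hab hba
    rw [hdspec] at hab hba; dsimp only at hab hba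
    split_ifs at hab with c1 c2 c3 <;> split_ifs at hba with d1 d2 d3 <;>
      cases hab <;> cases hba <;> try rfl
    · obtain ⟨-, -, hv⟩ := c1; obtain ⟨hd, -, -, -⟩ := d3; omega
    · obtain ⟨-, hu, -⟩ := c2; obtain ⟨-, -, -, hd⟩ := d3
      have := hvalα u hu; omega
    · obtain ⟨hc, -, -, hv⟩ := c3; obtain ⟨-, hvb, -⟩ := d1
      have := hvalβ v hvb; omega
    · obtain ⟨hc, -, -, hv⟩ := c3; obtain ⟨-, hva, -⟩ := d2
      have := hvalα v hva; omega
    · obtain ⟨-, -, -, hc⟩ := c3; obtain ⟨-, -, -, hd⟩ := d3; omega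
  set f : ((i : Fin r) × Fin (sizes i)) → ((i : Fin r) × Fin (sizes i)) → ℕ :=
    fun u v => (dspec u v).getD ((dspec v u).getD (t + 2 * encE s(u, v))) with hf
  have hsymm : ∀ u v, f u v = f v u := by
    intro u v
    rw [hf]; dsimp only
    rcases hd1 : dspec u v with - | a <;> rcases hd2 : dspec v u with - | b
    · rw [Option.getD_none, Option.getD_none, Option.getD_none, Option.getD_none,
        Sym2.eq_swap]
    · simp only [Option.getD_none, Option.getD_some]
    · simp only [Option.getD_none, Option.getD_some]
    · simp only [Option.getD_some]
      exact hcons u v a b hd1 hd2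
  set ce : Sym2 ((i : Fin r) × Fin (sizes i)) → ℕ := Sym2.lift ⟨f, hsymm⟩ with hce
  have hce_mk : ∀ u v, ce s(u, v) = f u v := by
    intro u v; rw [hce]; exact Sym2.lift_mk _ _ _
  set cv : ((i : Fin r) × Fin (sizes i)) → ℕ := fun v =>
    if 0 < t ∧ v = β then 0
    else if 2 ≤ t ∧ v = α then 0
    else if 1 ≤ v.1.val ∧ v.1.val + 2 ≤ t ∧ v.2.val = 1 then v.1.val + 1
    else t + 2 * encV v + 1 with hcv
  have hAdj : ∀ x y : (i : Fin r) × Fin (sizes i), x.1 ≠ y.1 → G.Adj x y := fun x y h => h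
  refine ⟨ce, cv, ?_, ?_⟩
  · -- TMC coloring
    intro u v huv
    by_cases hp : u.1 = v.1
    · -- same part: 2-path through a hub
      obtain ⟨i, a⟩ := u
      obtain ⟨j, b⟩ := v
      dsimp only at hp
      subst hp
      have hab : a ≠ b := by intro h; exact huv (by rw [h])
      have hit : i.val < t := by
        by_contra hge
        have hs1 := h1 i (not_lt.mp hge)
        apply hab
        have ha := a.isLt; have hb := b.isLt
        exact Fin.ext (by omega)
      obtain ⟨z, c, hz1, hzw, hcvz⟩ :
          ∃ (z : (i' : Fin r) × Fin (sizes i')) (c : ℕ), z.1 ≠ i ∧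
            (∀ w : (i' : Fin r) × Fin (sizes i'), w.1 = i → ce s(z, w) = c) ∧ cv z = c := by
        rcases Nat.lt_or_ge i.val 1 with hi0 | hi1
        · -- part 0 : hub β
          refine ⟨β, 0, ?_, ?_, ?_⟩
          · intro h
            have : β.1.val = 1 := by rw [hβ]
            omega
          · intro w hw
            have hd : dspec β w = some 0 := by
              rw [hdspec]; dsimp only
              rw [if_pos ⟨by omega, rfl, by rw [hw]; omega⟩]
            rw [hce_mk, hf]; dsimp only; rw [hd]; rfl
          · rw [hcv]; dsimp only
            rw [if_pos ⟨by omega, rfl⟩]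
        rcases Nat.lt_or_ge i.val 2 with hi1' | hi2
        · -- part 1 : hub α
          have hαβ : ¬ (α = β) := by
            intro h; have := hvalβ α h
            have : α.1.val = 0 := hvalα α rfl
            omega
          refine ⟨α, 0, ?_, ?_, ?_⟩
          · intro h
            have : α.1.val = 0 := hvalα α rfl
            omega
          · intro w hw
            have hd : dspec α w = some 0 := by
              rw [hdspec]; dsimp only
              rw [if_neg (by tauto), if_pos ⟨by omega, rfl, by rw [hw]; omega⟩]
            rw [hce_mk, hf]; dsimp only; rw [hd]; rfl
          · rw [hcv]; dsimp only
            rw [if_neg (by tauto), if_pos ⟨by omega, rfl⟩]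
        · -- part ≥ 2 : hub in previous part
          have hi1t : i.val - 1 < t := by omega
          have hsz : 2 ≤ sizes ⟨i.val - 1, by omega⟩ := h2 _ hi1t
          set z : (i' : Fin r) × Fin (sizes i') := ⟨⟨i.val - 1, by omega⟩, ⟨1, by omega⟩⟩ with hz
          have hz1v : z.1.val = i.val - 1 := by rw [hz]
          have hz2v : z.2.val = 1 := by rw [hz]
          have hβ2v : β.2.val = 0 := by rw [hβ]
          have hα2v : α.2.val = 0 := by rw [hα]
          refine ⟨z, i.val, ?_, ?_, ?_⟩
          · intro h
            have := congrArg Fin.val h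
            omega
          · intro w hw
            have hwv : w.1.val = i.val := by rw [hw]
            have hd : dspec z w = some (z.1.val + 1) := by
              rw [hdspec]; dsimp only
              rw [if_neg (by intro hh; omega), if_neg (by intro hh; omega),
                if_pos ⟨by omega, by omega, hz2v, by omega⟩]
            rw [hce_mk, hf]; dsimp only; rw [hd]
            show z.1.val + 1 = i.val
            omega
          · rw [hcv]; dsimp only
            have hzβ : ¬ (z = β) := by
              intro h; have := congrArg (fun x : (i' : Fin r) × Fin (sizes i') => x.2.val) h
              omega
            have hzα : ¬ (z = α) := by
              intro h; have := congrArg (fun x : (i' : Fin r) × Fin (sizes i') => x.2.val) h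
              omega
            rw [if_neg (by tauto), if_neg (by tauto),
              if_pos ⟨by omega, by omega, hz2v⟩]
            omega
      -- build the 2-path
      have ha1 : G.Adj ⟨i, a⟩ z := hAdj _ _ (fun h => hz1 h.symm)
      have ha2 : G.Adj z ⟨i, b⟩ := hAdj _ _ hz1
      refine ⟨Walk.cons ha1 (Walk.cons ha2 Walk.nil), ?_, ?_⟩
      · rw [Walk.cons_isPath_iff, Walk.cons_isPath_iff]
        refine ⟨⟨Walk.IsPath.nil, ?_⟩, ?_⟩
        · simp only [Walk.support_nil, List.mem_singleton]
          intro h; exact hz1 (congrArg Sigma.fst h)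
        · simp only [Walk.support_cons, Walk.support_nil, List.mem_cons, List.mem_singleton]
          push_neg
          exact ⟨fun h => hz1 (congrArg Sigma.fst h).symm, huv, by simp⟩
      · refine ⟨c, ?_, ?_⟩
        · intro e he
          simp only [Walk.edges_cons, Walk.edges_nil, List.mem_cons, List.not_mem_nil,
            or_false, List.mem_singleton] at he
          rcases he with rfl | rfl
          · rw [Sym2.eq_swap]; exact hzw ⟨i, a⟩ rfl
          · exact hzw ⟨i, b⟩ rfl
        · intro x hx
          simp only [Walk.support_cons, Walk.support_nil] at hx
          simp only [List.tail_cons, List.dropLast, List.mem_singleton] at hx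
          rw [hx]; exact hcvz
    · -- different parts: a single edge
      have hadj : G.Adj u v := hAdj _ _ hp
      refine ⟨Walk.cons hadj Walk.nil, ?_, ⟨ce s(u, v), ?_, ?_⟩⟩
      · rw [Walk.cons_isPath_iff]
        refine ⟨Walk.IsPath.nil, ?_⟩
        simp only [Walk.support_nil, List.mem_singleton]
        exact huv
      · intro e he
        simp only [Walk.edges_cons, Walk.edges_nil, List.mem_cons, List.not_mem_nil,
          or_false, List.mem_singleton] at he
        rw [he]
      · intro x hx
        simp only [Walk.support_cons, Walk.support_nil, List.tail_cons,
          List.dropLast_singleton, List.not_mem_nil] at hx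
  · -- counting
    have hdichE : ∀ e : Sym2 ((i : Fin r) × Fin (sizes i)), ce e < t ∨ ce e = t + 2 * encE e := by
      intro e
      induction e using Sym2.ind with
      | _ u v =>
        rw [hce_mk, hf]; dsimp only
        rcases hd1 : dspec u v with - | a
        · rcases hd2 : dspec v u with - | b
          · right; rw [Option.getD_none, Option.getD_none]
          · left; rw [Option.getD_none, Option.getD_some]; exact hds_lt v u b hd2
        · left; rw [Option.getD_some]; exact hds_lt u v a hd1
    have hdichV : ∀ v, cv v < t ∨ cv v = t + 2 * encV v + 1 := by
      intro v; rw [hcv]; dsimp only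
      split_ifs with c1 c2 c3
      · left; omega
      · left; omega
      · left; omega
      · right; rfl
    have hclassV : ∀ v, cv v < t →
        (0 < t ∧ v = β ∧ cv v = 0) ∨ (2 ≤ t ∧ v = α ∧ cv v = 0) ∨
          (1 ≤ v.1.val ∧ v.1.val + 2 ≤ t ∧ v.2.val = 1 ∧ cv v = v.1.val + 1) := by
      intro v hv
      rw [hcv] at hv ⊢
      dsimp only at hv ⊢
      split_ifs at hv ⊢ with c1 c2 c3
      · exact Or.inl ⟨c1.1, c1.2, rfl⟩
      · exact Or.inr (Or.inl ⟨c2.1, c2.2, rfl⟩)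
      · exact Or.inr (Or.inr ⟨c3.1, c3.2.1, c3.2.2, rfl⟩)
      · omega
    set NE := G.edgeFinset.filter (fun e => t ≤ ce e) with hNE
    set SP := G.edgeFinset.filter (fun e => ¬ t ≤ ce e) with hSPd
    have hsplit : NE.card + SP.card = G.edgeFinset.card :=
      Finset.card_filter_add_card_filter_not _
    have hNEinj : Set.InjOn ce ↑NE := by
      intro e he e' he' hee
      simp only [hNE, Finset.coe_filter, Set.mem_setOf_eq] at he he'
      rcases hdichE e with h | h
      · omega
      rcases hdichE e' with h' | h'
      · omega
      exact hencE (by omega)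
    set B := (univ : Finset ((i : Fin r) × Fin (sizes i))).filter (fun v => v.1.val < t) with hB
    set center : ((i : Fin r) × Fin (sizes i)) → ((i : Fin r) × Fin (sizes i)) := fun w =>
      if w.1.val = 0 then β
      else if w.1.val = 1 then α
      else ⟨⟨w.1.val - 1, by have := w.1.isLt; omega⟩,
        ⟨1 % sizes ⟨w.1.val - 1, by have := w.1.isLt; omega⟩, Nat.mod_lt _ (hpos _)⟩⟩
      with hcenter
    have hβ1 : β.1.val = 1 := by rw [hβ]
    have hα1 : α.1.val = 0 := by rw [hα]
    have hcard_e : ∀ (X : Finset ((i : Fin r) × Fin (sizes i))), Set.InjOn cv ↑X →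
        Disjoint (NE.image ce) (X.image cv) →
        NE.card + X.card ≤ colorsUsed G ce cv + 0 := by
      intro X hXinj hdisj
      rw [colorsUsed_eq, Nat.add_zero]
      calc NE.card + X.card = (NE.image ce ∪ X.image cv).card := by
            rw [Finset.card_union_of_disjoint hdisj, Finset.card_image_of_injOn hNEinj,
              Finset.card_image_of_injOn hXinj]
        _ ≤ _ := by
            apply Finset.card_le_card
            apply Finset.union_subset_union
            · exact Finset.image_subset_image (Finset.filter_subset _ _)
            · exact Finset.image_subset_image (Finset.subset_univ _)
    have hdisjmk : ∀ (X : Finset ((i : Fin r) × Fin (sizes i))),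
        Disjoint (NE.image ce) (X.image cv) := by
      intro X
      rw [Finset.disjoint_left]
      intro c hc1 hc2
      simp only [Finset.mem_image] at hc1 hc2
      obtain ⟨e, he, rfl⟩ := hc1
      obtain ⟨v, hv, hcv'⟩ := hc2
      simp only [hNE, Finset.mem_filter] at he
      rcases hdichE e with h | h
      · omega
      rcases hdichV v with h' | h' <;> omega
    rcases Nat.lt_or_ge t 2 with ht2 | ht2
    · -- t ≤ 1
      have hkey : ∀ u v, (∃ a, dspec u v = some a) →
          s(u, v) ∈ B.image (fun w => s(center w, w)) := by
        rintro u v ⟨a, hd⟩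
        rw [hdspec] at hd; dsimp only at hd
        split_ifs at hd with c1 c2 c3
        · obtain ⟨h0t, huβ, hv0⟩ := c1
          refine Finset.mem_image.mpr ⟨v, ?_, ?_⟩
          · simp only [hB, Finset.mem_filter, Finset.mem_univ, true_and]
            omega
          · rw [hcenter]; dsimp only
            rw [if_pos hv0, huβ]
        · omega
        · omega
      have hSPsub : SP ⊆ B.image (fun w => s(center w, w)) := by
        intro e he
        revert he
        induction e using Sym2.ind with
        | _ u v =>
          intro he
          simp only [hSPd, Finset.mem_filter, not_le] at he
          have hlt := he.2
          rw [hce_mk, hf] at hlt; dsimp only at hlt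
          rcases hd1 : dspec u v with - | a
          · rcases hd2 : dspec v u with - | b
            · rw [hd1, hd2] at hlt
              simp only [Option.getD_none] at hlt; omega
            · rw [Sym2.eq_swap]; exact hkey v u ⟨b, hd2⟩
          · exact hkey u v ⟨a, hd1⟩
      have hcvinj : Set.InjOn cv ↑(univ : Finset ((i : Fin r) × Fin (sizes i))) := by
        intro v _ v' _ heq
        rcases hdichV v with h | h <;> rcases hdichV v' with h' | h'
        · rcases hclassV v h with ⟨-, hb, hc⟩ | ⟨w2, -, -⟩ | ⟨-, w2, -, -⟩ <;>
            [skip; omega; omega]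
          rcases hclassV v' h' with ⟨-, hb', hc'⟩ | ⟨w2, -, -⟩ | ⟨-, w2, -, -⟩ <;>
            [skip; omega; omega]
          rw [hb, hb']
        · omega
        · omega
        · exact hencV (by omega)
      have hSPle : SP.card ≤ B.card :=
        le_trans (Finset.card_le_card hSPsub) Finset.card_image_le
      have := hcard_e univ hcvinj (hdisjmk _)
      rw [Finset.card_univ] at this
      have hgoal : #G.edgeFinset + Fintype.card ((i : Fin r) × Fin (sizes i))
          ≤ colorsUsed G ce cv + #B := by omega
      exact hgoal
    · -- 2 ≤ t
      have hαB : α ∈ B := by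
        simp only [hB, Finset.mem_filter, Finset.mem_univ, true_and]
        omega
      have hkey : ∀ u v, (∃ a, dspec u v = some a) →
          s(u, v) ∈ (B.erase α).image (fun w => s(center w, w)) := by
        rintro u v ⟨a, hd⟩
        rw [hdspec] at hd; dsimp only at hd
        split_ifs at hd with c1 c2 c3
        · obtain ⟨h0t, huβ, hv0⟩ := c1
          by_cases hvα : v = α
          · refine Finset.mem_image.mpr ⟨β, ?_, ?_⟩
            · simp only [Finset.mem_erase, hB, Finset.mem_filter, Finset.mem_univ, true_and]
              exact ⟨fun h => by have := hvalα β h; omega, by omega⟩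
            · rw [hcenter]; dsimp only
              rw [if_neg (by omega), if_pos hβ1]
              rw [huβ, hvα, Sym2.eq_swap]
          · refine Finset.mem_image.mpr ⟨v, ?_, ?_⟩
            · simp only [Finset.mem_erase, hB, Finset.mem_filter, Finset.mem_univ, true_and]
              exact ⟨hvα, by omega⟩
            · rw [hcenter]; dsimp only
              rw [if_pos hv0, huβ]
        · obtain ⟨h2t, huα, hv1⟩ := c2
          refine Finset.mem_image.mpr ⟨v, ?_, ?_⟩
          · simp only [Finset.mem_erase, hB, Finset.mem_filter, Finset.mem_univ, true_and]
            exact ⟨fun h => by have := hvalα v h; omega, by omega⟩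
          · rw [hcenter]; dsimp only
            rw [if_neg (by omega), if_pos hv1, huα]
        · obtain ⟨hc1, hc2', hc3', hc4⟩ := c3
          refine Finset.mem_image.mpr ⟨v, ?_, ?_⟩
          · simp only [Finset.mem_erase, hB, Finset.mem_filter, Finset.mem_univ, true_and]
            exact ⟨fun h => by have := hvalα v h; omega, by omega⟩
          · rw [hcenter]; dsimp only
            rw [if_neg (by omega), if_neg (by omega)]
            have hu1t : u.1.val < t := by omega
            have hs2 : 2 ≤ sizes u.1 := h2 u.1 hu1t
            have hfst : (⟨v.1.val - 1, by have := v.1.isLt; omega⟩ : Fin r) = u.1 :=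
              Fin.ext (by simp only []; omega)
            have hceq : (⟨⟨v.1.val - 1, by have := v.1.isLt; omega⟩,
                ⟨1 % sizes ⟨v.1.val - 1, by have := v.1.isLt; omega⟩, Nat.mod_lt _ (hpos _)⟩⟩ :
                (i : Fin r) × Fin (sizes i)) = u := by
              refine Sigma.ext hfst ?_
              rw [Fin.heq_ext_iff (congrArg (fun x => sizes x) hfst)]
              simp only []
              rw [hfst, Nat.mod_eq_of_lt (by omega)]
              omega
            rw [hceq]
      have hSPsub : SP ⊆ (B.erase α).image (fun w => s(center w, w)) := by
        intro e he
        revert he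
        induction e using Sym2.ind with
        | _ u v =>
          intro he
          simp only [hSPd, Finset.mem_filter, not_le] at he
          have hlt := he.2
          rw [hce_mk, hf] at hlt; dsimp only at hlt
          rcases hd1 : dspec u v with - | a
          · rcases hd2 : dspec v u with - | b
            · rw [hd1, hd2] at hlt
              simp only [Option.getD_none] at hlt; omega
            · rw [Sym2.eq_swap]; exact hkey v u ⟨b, hd2⟩
          · exact hkey u v ⟨a, hd1⟩
      have hcvinj : Set.InjOn cv ↑((univ : Finset ((i : Fin r) × Fin (sizes i))).erase α) := by
        intro v hv v' hv' heq
        simp only [Finset.coe_erase, Set.mem_diff, Set.mem_singleton_iff] at hv hv'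
        rcases hdichV v with h | h <;> rcases hdichV v' with h' | h'
        · rcases hclassV v h with ⟨-, hb, hc⟩ | ⟨-, ha, -⟩ | ⟨p1, p2, p3, hc⟩
          · rcases hclassV v' h' with ⟨-, hb', hc'⟩ | ⟨-, ha', -⟩ | ⟨q1, q2, q3, hc'⟩
            · rw [hb, hb']
            · exact absurd ha' hv'.2
            · rw [hc, hc'] at heq; omega
          · exact absurd ha hv.2
          · rcases hclassV v' h' with ⟨-, hb', hc'⟩ | ⟨-, ha', -⟩ | ⟨q1, q2, q3, hc'⟩
            · rw [hc, hc'] at heq; omega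
            · exact absurd ha' hv'.2
            · obtain ⟨iv, av⟩ := v
              obtain ⟨iv', av'⟩ := v'
              rw [hc, hc'] at heq
              dsimp only at p3 q3 heq
              have hfst : iv = iv' := Fin.ext (by omega)
              subst hfst
              have : av = av' := Fin.ext (by omega)
              rw [this]
        · omega
        · omega
        · exact hencV (by omega)
      have hSPle : SP.card ≤ (B.erase α).card :=
        le_trans (Finset.card_le_card hSPsub) Finset.card_image_le
      have hcb : (B.erase α).card = B.card - 1 := Finset.card_erase_of_mem hαB
      have hBpos : 1 ≤ B.card := Finset.card_pos.mpr ⟨α, hαB⟩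
      have hcu : ((univ : Finset ((i : Fin r) × Fin (sizes i))).erase α).card
          = Fintype.card ((i : Fin r) × Fin (sizes i)) - 1 := by
        rw [Finset.card_erase_of_mem (Finset.mem_univ _), Finset.card_univ]
      have hnpos : 1 ≤ Fintype.card ((i : Fin r) × Fin (sizes i)) :=
        Fintype.card_pos_iff.mpr ⟨α⟩
      have := hcard_e _ hcvinj (hdisjmk _)
      rw [hcu] at this
      have hgoal : #G.edgeFinset + Fintype.card ((i : Fin r) × Fin (sizes i))
          ≤ colorsUsed G ce cv + #B := by omega
      exact hgoal

theorem stmt8 (r t : ℕ) (sizes : Fin r → ℕ) (ht : t ≤ r)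
    (hmono : ∀ i j : Fin r, i ≤ j → sizes j ≤ sizes i)
    (h2 : ∀ i : Fin r, (i : ℕ) < t → 2 ≤ sizes i)
    (h1 : ∀ i : Fin r, t ≤ (i : ℕ) → sizes i = 1) :
    tmc (SimpleGraph.completeMultipartiteGraph (fun i : Fin r => Fin (sizes i))) =
      (SimpleGraph.completeMultipartiteGraph (fun i : Fin r => Fin (sizes i))).edgeSet.ncard
        + r - t := by
  classical
  set G := completeMultipartiteGraph (fun i : Fin r => Fin (sizes i)) with hG
  rcases Nat.lt_or_ge r 2 with hr | hr
  · -- r ≤ 1 : degenerate cases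
    have hfst : ∀ u v : (i : Fin r) × Fin (sizes i), u.1 = v.1 := by
      intro u v
      have hu := u.1.isLt
      have hv := v.1.isLt
      exact Fin.ext (by omega)
    have hE : G.edgeSet = ∅ := by
      ext e
      induction e using Sym2.ind with
      | _ u v =>
        simp only [Set.mem_empty_iff_false, iff_false, mem_edgeSet]
        exact fun h => h (hfst u v)
    have ht2 : t < 2 := by omega
    interval_cases t
    · -- t = 0 : all parts singletons
      have hone : ∀ i : Fin r, sizes i = 1 := fun i => h1 i (Nat.zero_le _)
      have hsub : ∀ u v : (i : Fin r) × Fin (sizes i), u = v := by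
        rintro ⟨i, a⟩ ⟨j, b⟩
        have hij : i = j := Fin.ext (by have := i.isLt; have := j.isLt; omega)
        subst hij
        have ha := a.isLt
        have hb := b.isLt
        have := hone i
        have : a = b := Fin.ext (by omega)
        rw [this]
      have hcard : Fintype.card ((i : Fin r) × Fin (sizes i)) = r := by
        rw [cardV]
        rw [Finset.sum_congr rfl (fun i _ => hone i)]
        simp
      have hrange : ∀ cv : ((i : Fin r) × Fin (sizes i)) → ℕ, (Set.range cv).ncard = r := by
        intro cv
        cases isEmpty_or_nonempty ((i : Fin r) × Fin (sizes i)) with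
        | inl h =>
          have : r = 0 := by rw [← hcard]; exact Fintype.card_eq_zero
          rw [Set.range_eq_empty cv, Set.ncard_empty, this]
        | inr h =>
          obtain ⟨v0⟩ := h
          have hr1 : r = 1 := by
            have : 0 < Fintype.card ((i : Fin r) × Fin (sizes i)) :=
              Fintype.card_pos_iff.mpr ⟨v0⟩
            omega
          have : Set.range cv = {cv v0} := by
            ext y
            constructor
            · rintro ⟨u, rfl⟩; rw [hsub u v0]; rfl
            · rintro rfl; exact ⟨v0, rfl⟩
          rw [this, Set.ncard_singleton, hr1]
      have hS : {k | ∃ ce cv, IsTMCColoring G ce cv ∧ colorsUsed G ce cv = k} = {r} := by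
        ext k
        simp only [Set.mem_setOf_eq, Set.mem_singleton_iff]
        constructor
        · rintro ⟨ce, cv, -, rfl⟩
          rw [colorsUsed, hE]
          simp only [Set.image_empty, Set.empty_union]
          exact hrange cv
        · rintro rfl
          refine ⟨fun _ => 0, fun _ => 0, fun u v huv => absurd (hsub u v) huv, ?_⟩
          rw [colorsUsed, hE]
          simp only [Set.image_empty, Set.empty_union]
          exact hrange _
        
      have : tmc G = sSup {k | ∃ ce cv, IsTMCColoring G ce cv ∧ colorsUsed G ce cv = k} := rfl
      rw [this, hS, csSup_singleton, hE]
      simp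
    · -- t = 1 : r = 1, one part of size ≥ 2, no TMC coloring exists
      have hi0 : (0 : ℕ) < r := by omega
      have hs0 : 2 ≤ sizes ⟨0, hi0⟩ := h2 ⟨0, hi0⟩ (by simp)
      set u0 : (i : Fin r) × Fin (sizes i) := ⟨⟨0, hi0⟩, ⟨0, by omega⟩⟩ with hu0
      set v0 : (i : Fin r) × Fin (sizes i) := ⟨⟨0, hi0⟩, ⟨1, by omega⟩⟩ with hv0
      have hne : u0 ≠ v0 := by
        intro h
        have := congrArg (fun x : (i : Fin r) × Fin (sizes i) => x.2.val) h
        rw [hu0, hv0] at this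
        simp at this
      have hnoWalk : ∀ (u v : (i : Fin r) × Fin (sizes i)) (_ : G.Walk u v), u = v := by
        intro u v w
        induction w with
        | nil => rfl
        | cons h p ih => exact absurd (hfst _ _) h
      have hS : {k | ∃ ce cv, IsTMCColoring G ce cv ∧ colorsUsed G ce cv = k} = ∅ := by
        rw [Set.eq_empty_iff_forall_notMem]
        rintro k ⟨ce, cv, hT, -⟩
        obtain ⟨w, -, -⟩ := hT u0 v0 hne
        exact hne (hnoWalk _ _ w)
      have : tmc G = sSup {k | ∃ ce cv, IsTMCColoring G ce cv ∧ colorsUsed G ce cv = k} := rfl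
      rw [this, hS, csSup_empty, hE]
      simp
      omega
  · -- r ≥ 2
    have hpos : ∀ i : Fin r, 0 < sizes i := by
      intro i
      rcases lt_or_ge (i : ℕ) t with h | h
      · have := h2 i h; omega
      · rw [h1 i h]; omega
    obtain ⟨ce, cv, hTMC, hge⟩ := construction ht hr h2 h1
    set B := (univ : Finset ((i : Fin r) × Fin (sizes i))).filter (fun v => v.1.val < t) with hB
    have hBspec : ∀ u ∈ B, ∃ v, v ≠ u ∧ ¬ G.Adj u v := by
      rintro ⟨i, a⟩ hu
      simp only [hB, Finset.mem_filter, Finset.mem_univ, true_and] at hu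
      have hs2 : 2 ≤ sizes i := h2 i hu
      by_cases ha : a.val = 0
      · refine ⟨⟨i, ⟨1, by omega⟩⟩, ?_, ?_⟩
        · intro h
          have := congrArg (fun x : (i : Fin r) × Fin (sizes i) => x.2.val) h
          dsimp only at this; omega
        · exact fun h => h rfl
      · refine ⟨⟨i, ⟨0, by omega⟩⟩, ?_, ?_⟩
        · intro h
          have := congrArg (fun x : (i : Fin r) × Fin (sizes i) => x.2.val) h
          dsimp only at this; omega
        · exact fun h => h rfl
    have hge' : #G.edgeFinset + Fintype.card ((i : Fin r) × Fin (sizes i))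
        ≤ colorsUsed G ce cv + #B := hge
    have hub : ∀ k ∈ {k | ∃ ce cv, IsTMCColoring G ce cv ∧ colorsUsed G ce cv = k},
        k ≤ colorsUsed G ce cv := by
      rintro k ⟨ce', cv', hT', rfl⟩
      have h1' := tmc_upper hT' B hBspec
      omega
    have hgreat : IsGreatest {k | ∃ ce cv, IsTMCColoring G ce cv ∧ colorsUsed G ce cv = k}
        (colorsUsed G ce cv) := ⟨⟨ce, cv, hTMC, rfl⟩, hub⟩
    have htmc : tmc G = colorsUsed G ce cv := hgreat.csSup_eq
    have hup : colorsUsed G ce cv + #B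
        ≤ #G.edgeFinset + Fintype.card ((i : Fin r) × Fin (sizes i)) :=
      tmc_upper hTMC B hBspec
    have hBc : #B = ∑ i ∈ (univ : Finset (Fin r)).filter (fun i => i.val < t), sizes i :=
      cardB (t := t) sizes
    have hV := cardV sizes
    have hsum := sumSizes sizes ht h1
    have hmn : G.edgeSet.ncard = G.edgeFinset.card := Set.ncard_eq_toFinset_card' _
    rw [htmc]
    omega
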